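/- If A, B are strictly accretive and simultaneously diagonalizable by congruence, i.e., A = TᴴD_A T and B = TᴴD_B T with T invertible and D_A, D_B diagonal, then A#B = Tᴴ(D_A # D_B)T, where # denotes the geometric mean of strictly accretive matrices. -/

import Mathlib

open Matrix
open scoped ComplexOrder

/-- A strictly accretive matrix is invertible. -/
lemma isUnit_of_accretive {n : ℕ} {A : Matrix (Fin n) (Fin n) ℂ}
    (hA : Matrix.PosDef ((2⁻¹ : ℂ) • (A + Aᴴ))) : IsUnit A := by
  rw [← Matrix.mulVec_injective_iff_isUnit]
  intro x y hxy
  by_contra hne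
  have hz : A *ᵥ (x - y) = 0 := by rw [Matrix.mulVec_sub, hxy, sub_self]
  have h := hA.dotProduct_mulVec_pos (sub_ne_zero.mpr hne)
  have h1 : star (x - y) ⬝ᵥ Aᴴ *ᵥ (x - y) = 0 := by
    rw [Matrix.dotProduct_mulVec, ← Matrix.star_mulVec, hz]
    simp
  have h2 : star (x - y) ⬝ᵥ A *ᵥ (x - y) = 0 := by rw [hz]; simp
  rw [smul_mulVec, add_mulVec, dotProduct_smul,
    dotProduct_add, h1, h2] at h
  simp at h

/-- Congruence by an invertible matrix preserves positive definiteness. -/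
lemma posDef_conj {n : ℕ} {M T : Matrix (Fin n) (Fin n) ℂ}
    (hM : M.PosDef) (hT : IsUnit T) : (Tᴴ * M * T).PosDef := by
  refine Matrix.PosDef.of_dotProduct_mulVec_pos (Matrix.isHermitian_conjTranspose_mul_mul T hM.1) (fun x hx => ?_)
  have hTx : T *ᵥ x ≠ 0 := by
    intro h0
    exact hx ((Matrix.mulVec_injective_iff_isUnit.mpr hT) (by simp [h0]))
  have := hM.dotProduct_mulVec_pos hTx
  simpa only [Matrix.star_mulVec, Matrix.dotProduct_mulVec, Matrix.vecMul_vecMul] using this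

/-- If `A, B` are strictly accretive and simultaneously diagonalizable by congruence,
`A = Tᴴ D_A T`, `B = Tᴴ D_B T` with `T` invertible and `D_A, D_B` diagonal, then
`A # B = Tᴴ (D_A # D_B) T`, where the geometric mean `#` of strictly accretive
matrices is characterized as the unique strictly accretive solution `G` of
`G A⁻¹ G = B`. -/
theorem geometricMean_simultaneous_diag_congruence {n : ℕ}
    (A B T DA DB G GD : Matrix (Fin n) (Fin n) ℂ)
    (hA : Matrix.PosDef ((2⁻¹ : ℂ) • (A + Aᴴ)))
    (hB : Matrix.PosDef ((2⁻¹ : ℂ) • (B + Bᴴ)))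
    (hT : IsUnit T) (hDA : DA.IsDiag) (hDB : DB.IsDiag)
    (hAeq : A = Tᴴ * DA * T) (hBeq : B = Tᴴ * DB * T)
    (hG : Matrix.PosDef ((2⁻¹ : ℂ) • (G + Gᴴ)))
    (hGsol : G * A⁻¹ * G = B)
    (hGuniq : ∀ G' : Matrix (Fin n) (Fin n) ℂ,
      Matrix.PosDef ((2⁻¹ : ℂ) • (G' + G'ᴴ)) → G' * A⁻¹ * G' = B → G' = G)
    (hGD : Matrix.PosDef ((2⁻¹ : ℂ) • (GD + GDᴴ)))
    (hGDsol : GD * DA⁻¹ * GD = DB) :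
    G = Tᴴ * GD * T := by
  have hAu : IsUnit A := isUnit_of_accretive hA
  have hTH : IsUnit Tᴴ := (Matrix.isUnit_conjTranspose T).mpr hT
  have hDAu : IsUnit DA := by
    have : IsUnit (Tᴴ * DA * T) := hAeq ▸ hAu
    rw [Matrix.isUnit_iff_isUnit_det] at this
    rw [Matrix.det_mul, Matrix.det_mul] at this
    exact (Matrix.isUnit_iff_isUnit_det DA).mpr
      (isUnit_of_mul_isUnit_right (isUnit_of_mul_isUnit_left this))
  have hAinv : A⁻¹ = T⁻¹ * DA⁻¹ * Tᴴ⁻¹ := by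
    rw [hAeq, Matrix.mul_inv_rev, Matrix.mul_inv_rev, mul_assoc]
  have hpos : Matrix.PosDef ((2⁻¹ : ℂ) • (Tᴴ * GD * T + (Tᴴ * GD * T)ᴴ)) := by
    have : (2⁻¹ : ℂ) • (Tᴴ * GD * T + (Tᴴ * GD * T)ᴴ)
        = Tᴴ * ((2⁻¹ : ℂ) • (GD + GDᴴ)) * T := by
      simp only [Matrix.conjTranspose_mul, Matrix.conjTranspose_conjTranspose]
      rw [Matrix.mul_smul, Matrix.smul_mul]
      ring_nf
      noncomm_ring
    rw [this]
    exact posDef_conj hGD hT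
  have hsol : (Tᴴ * GD * T) * A⁻¹ * (Tᴴ * GD * T) = B := by
    rw [hAinv, hBeq, ← hGDsol]
    have h1 : T * (T⁻¹ * DA⁻¹ * Tᴴ⁻¹) = DA⁻¹ * Tᴴ⁻¹ := by
      rw [← mul_assoc, ← mul_assoc, Matrix.mul_nonsing_inv _
        ((Matrix.isUnit_iff_isUnit_det T).mp hT), one_mul]
    have h2 : Tᴴ⁻¹ * (Tᴴ * GD * T) = GD * T := by
      rw [← mul_assoc, ← mul_assoc, Matrix.nonsing_inv_mul _
        ((Matrix.isUnit_iff_isUnit_det Tᴴ).mp hTH), one_mul]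
    calc Tᴴ * GD * T * (T⁻¹ * DA⁻¹ * Tᴴ⁻¹) * (Tᴴ * GD * T)
        = Tᴴ * GD * (T * (T⁻¹ * DA⁻¹ * Tᴴ⁻¹)) * (Tᴴ * GD * T) := by noncomm_ring
      _ = Tᴴ * GD * (DA⁻¹ * Tᴴ⁻¹) * (Tᴴ * GD * T) := by rw [h1]
      _ = Tᴴ * GD * DA⁻¹ * (Tᴴ⁻¹ * (Tᴴ * GD * T)) := by noncomm_ring
      _ = Tᴴ * GD * DA⁻¹ * (GD * T) := by rw [h2]
      _ = Tᴴ * (GD * DA⁻¹ * GD) * T := by noncomm_ring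
  exact (hGuniq _ hpos hsol).symm
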